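/- Let s ∈ Ṡ and let u be a periodic sequence of integers such that σ^k(u) ∉ {K⁺(s), K⁻(s)} for all k ≥ 1. Then there exists a periodic external address r with itin_s(r) = u, and moreover every address r ∈ S̄ with itin_s(r) = u is a periodic external address. -/

import Mathlib

noncomputable section

/-- Entries of an address: a real number or `∞`. -/
abbrev Entry : Type := WithTop ℝ

/-- An address is a sequence of entries. -/
abbrev Addr : Type := ℕ → Entry

/-- The address `∞` (all of whose entries are infinite). -/
def topAddr : Addr := fun _ => ⊤

/-- The shift map `σ`, deleting the first entry. -/
def shift (a : Addr) : Addr := fun k => a (k + 1)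

/-- The iterated shift `σ^k`. -/
def shiftIter (a : Addr) (k : ℕ) : Addr := fun j => a (j + k)

/-- `σ^k(a)` is defined (all earlier iterates differ from `∞`). -/
def shiftDef (a : Addr) (k : ℕ) : Prop := ∀ j, j < k → shiftIter a j ≠ topAddr

/-- Prepending an entry to an address. -/
def consAddr (x : Entry) (a : Addr) : Addr := fun k => if k = 0 then x else a (k - 1)

/-- The lexicographic (strict) order on addresses. -/
def addrLt (a b : Addr) : Prop := ∃ k, (∀ j, j < k → a j = b j) ∧ a k < b k

/-- The lexicographic order on addresses. -/
def addrLe (a b : Addr) : Prop := addrLt a b ∨ a = b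

/-- Infinite external addresses: all entries are integers. -/
def IsExtAddr (a : Addr) : Prop := ∀ k, ∃ m : ℤ, a k = ((m : ℝ) : Entry)

/-- Intermediate external addresses of length `n ≥ 1`: the first `n - 2` entries are
integers, the `(n-1)`-st entry lies in `ℤ + 1/2`, and all further entries are `∞`
(for `n = 1` this is the address `∞` itself). -/
def IsIntermediate (a : Addr) (n : ℕ) : Prop :=
  1 ≤ n ∧ (∀ k, k + 2 < n → ∃ m : ℤ, a k = ((m : ℝ) : Entry)) ∧
    (∀ k, k + 2 = n → ∃ m : ℤ, a k = (((m : ℝ) + 1 / 2 : ℝ) : Entry)) ∧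
    (∀ k, n ≤ k + 1 → a k = ⊤)

/-- Membership in `Ṡ`: infinite external addresses and intermediate ones of length `≥ 2`. -/
def InSDot (a : Addr) : Prop := IsExtAddr a ∨ ∃ n, 2 ≤ n ∧ IsIntermediate a n

/-- Membership in `S̄ = Ṡ ∪ {∞}`. -/
def InSBar (a : Addr) : Prop := InSDot a ∨ a = topAddr

/-- `a` is periodic of (exact) period `n`. -/
def PeriodicAddr (a : Addr) (n : ℕ) : Prop :=
  1 ≤ n ∧ shiftIter a n = a ∧ ∀ m, 1 ≤ m → m < n → shiftIter a m ≠ a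

/-- Itinerary entries: integers `j`, boundary symbols `[j/(j-1)]` (encoded `bdy j`),
or the symbol `*`. -/
inductive ItinEntry : Type
  | int : ℤ → ItinEntry
  | bdy : ℤ → ItinEntry
  | star : ItinEntry
  deriving DecidableEq

open scoped Classical in
/-- The itinerary `itin_s(r)`; position `k` holds the entry `u_{k+1}` of the paper:
`u_{k+1} = j` if `js < σ^k(r) < (j+1)s`, the boundary symbol `[j/(j-1)]` if `σ^k(r) = js`,
and `*` if `σ^k(r) = ∞`. -/
def itin (s r : Addr) : ℕ → ItinEntry := fun k =>
  if shiftIter r k = topAddr then ItinEntry.star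
  else if h : ∃ j : ℤ, shiftIter r k = consAddr ((j : ℝ) : Entry) s then ItinEntry.bdy h.choose
  else if h : ∃ j : ℤ, addrLt (consAddr ((j : ℝ) : Entry) s) (shiftIter r k) ∧
      addrLt (shiftIter r k) (consAddr (((j + 1 : ℤ) : ℝ) : Entry) s) then ItinEntry.int h.choose
  else ItinEntry.star

/-- Replace each boundary symbol `[j/(j-1)]` by `j`. -/
def entryPlus : ItinEntry → ItinEntry
  | ItinEntry.bdy j => ItinEntry.int j
  | e => e

/-- Replace each boundary symbol `[j/(j-1)]` by `j - 1`. -/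
def entryMinus : ItinEntry → ItinEntry
  | ItinEntry.bdy j => ItinEntry.int (j - 1)
  | e => e

/-- The itinerary `itin⁺_s(r)`. -/
def itinPlus (s r : Addr) : ℕ → ItinEntry := fun k => entryPlus (itin s r k)

/-- The itinerary `itin⁻_s(r)`. -/
def itinMinus (s r : Addr) : ℕ → ItinEntry := fun k => entryMinus (itin s r k)

/-- The periodic itinerary `(u_1 … u_n)^∞` (with `u_i` encoded as `u (i - 1)`). -/
def perItin (u : ℕ → ℤ) (n : ℕ) : ℕ → ItinEntry := fun k => ItinEntry.int (u (k % n))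

/-- The finite itinerary word `u_1 … u_{n-1} *` (star from position `n - 1` onwards). -/
def finWord (u : ℕ → ℤ) (n : ℕ) : ℕ → ItinEntry := fun k =>
  if k + 1 < n then ItinEntry.int (u k) else ItinEntry.star

/-- A combinatorial characteristic ray pair of period `n` with itinerary `(u_1 … u_n)^∞`. -/
def CharRayPair (rm rp : Addr) (n : ℕ) (u : ℕ → ℤ) : Prop :=
  IsExtAddr rm ∧ IsExtAddr rp ∧ PeriodicAddr rm n ∧ PeriodicAddr rp n ∧ addrLt rm rp ∧
    (∀ k, 1 ≤ k → ¬(addrLt rm (shiftIter rm k) ∧ addrLt (shiftIter rm k) rp)) ∧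
    (∀ k, 1 ≤ k → ¬(addrLt rm (shiftIter rp k) ∧ addrLt (shiftIter rp k) rp)) ∧
    itinMinus rm rm = perItin u n ∧ itinMinus rm rp = perItin u n ∧
    addrLt (shiftIter rp (n - 1)) (shiftIter rm (n - 1))

/-! ### Auxiliary lemmas -/

namespace Stmt4Aux

/-- integer entry -/
def ic (m : ℤ) : Entry := ((m : ℝ) : Entry)

lemma ic_lt_ic {m m' : ℤ} : ic m < ic m' ↔ m < m' := by
  unfold ic
  rw [WithTop.coe_lt_coe]
  exact_mod_cast Iff.rfl

lemma ic_inj {m m' : ℤ} (h : ic m = ic m') : m = m' := by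
  unfold ic at h
  rw [WithTop.coe_inj] at h
  exact_mod_cast h

lemma ic_ne_top (m : ℤ) : ic m ≠ (⊤ : Entry) := WithTop.coe_ne_top

lemma ic_trichot (m m' : ℤ) : ic m < ic m' ∨ m = m' ∨ ic m' < ic m := by
  rcases lt_trichotomy m m' with h | h | h
  · exact Or.inl (ic_lt_ic.mpr h)
  · exact Or.inr (Or.inl h)
  · exact Or.inr (Or.inr (ic_lt_ic.mpr h))

/-- coercion of an integer sequence to an address -/
def toAddr (r : ℕ → ℤ) : Addr := fun k => ic (r k)

lemma toAddr_ext (r : ℕ → ℤ) : IsExtAddr (toAddr r) := fun k => ⟨r k, rfl⟩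

lemma shiftIter_apply (a : Addr) (k j : ℕ) : shiftIter a k j = a (j + k) := rfl

lemma shiftIter_shiftIter (a : Addr) (k m : ℕ) :
    shiftIter (shiftIter a k) m = shiftIter a (m + k) := by
  funext j; simp only [shiftIter]; ring_nf

lemma shiftIter_zero (a : Addr) : shiftIter a 0 = a := by funext j; simp [shiftIter]

lemma shiftIter_toAddr (r : ℕ → ℤ) (m : ℕ) :
    shiftIter (toAddr r) m = toAddr (fun e => r (e + m)) := by
  funext j; rfl

/-! ### basic order lemmas -/

lemma addrLt_irrefl (a : Addr) : ¬ addrLt a a := by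
  rintro ⟨k, _, hk⟩; exact lt_irrefl _ hk

lemma addrLt_asymm {a b : Addr} (h1 : addrLt a b) (h2 : addrLt b a) : False := by
  obtain ⟨k, hpre, hk⟩ := h1
  obtain ⟨k', hpre', hk'⟩ := h2
  rcases lt_trichotomy k k' with h | h | h
  · rw [hpre' k h] at hk; exact lt_irrefl _ hk
  · subst h; exact lt_irrefl _ (hk.trans hk')
  · rw [hpre k' h] at hk'; exact lt_irrefl _ hk'

lemma addr_trichot (a b : Addr) : addrLt a b ∨ a = b ∨ addrLt b a := by
  by_cases h : a = b
  · exact Or.inr (Or.inl h)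
  · have hex : ∃ k, a k ≠ b k := by
      by_contra hc
      push_neg at hc
      exact h (funext hc)
    classical
    have hfind := Nat.find_spec hex
    have hmin : ∀ j, j < Nat.find hex → a j = b j := fun j hj => by
      by_contra hc; exact Nat.find_min hex hj hc
    rcases lt_or_gt_of_ne hfind with hlt | hgt
    · exact Or.inl ⟨Nat.find hex, hmin, hlt⟩
    · exact Or.inr (Or.inr ⟨Nat.find hex, fun j hj => (hmin j hj).symm, hgt⟩)

/-- first differences are unique: if `a < b`, they agree below `d` and differ at `d`,
then `a d < b d`. -/
lemma addrLt_at {a b : Addr} (h : addrLt a b) {d : ℕ}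
    (hpre : ∀ j, j < d → a j = b j) (hd : a d ≠ b d) : a d < b d := by
  obtain ⟨k, hpk, hk⟩ := h
  rcases lt_trichotomy k d with hc | hc | hc
  · exact absurd (hpre k hc) (ne_of_lt hk)
  · subst hc; exact hk
  · exact absurd (hpk d hc) hd

end Stmt4Aux
namespace Stmt4Aux

lemma shiftIter_consAddr (x : Entry) (t : Addr) : shiftIter (consAddr x t) 1 = t := by
  funext j; simp [shiftIter, consAddr]

lemma consAddr_zero (x : Entry) (t : Addr) : consAddr x t 0 = x := rfl

lemma cons_lt_iff {x : Entry} {t b : Addr} :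
    addrLt (consAddr x t) b ↔ x < b 0 ∨ (x = b 0 ∧ addrLt t (shiftIter b 1)) := by
  constructor
  · rintro ⟨k, hpre, hk⟩
    cases k with
    | zero => exact Or.inl hk
    | succ k' =>
      refine Or.inr ⟨hpre 0 (Nat.succ_pos _), ⟨k', fun j hj => ?_, ?_⟩⟩
      · have := hpre (j + 1) (by omega)
        simpa [consAddr, shiftIter] using this
      · simpa [consAddr, shiftIter] using hk
  · rintro (h | ⟨h0, k, hpre, hk⟩)
    · exact ⟨0, by omega, h⟩
    · refine ⟨k + 1, fun j hj => ?_, ?_⟩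
      · cases j with
        | zero => exact h0
        | succ j' =>
          have := hpre j' (by omega)
          simpa [consAddr, shiftIter] using this
      · simpa [consAddr, shiftIter] using hk

lemma lt_cons_iff {x : Entry} {t a : Addr} :
    addrLt a (consAddr x t) ↔ a 0 < x ∨ (a 0 = x ∧ addrLt (shiftIter a 1) t) := by
  constructor
  · rintro ⟨k, hpre, hk⟩
    cases k with
    | zero => exact Or.inl hk
    | succ k' =>
      refine Or.inr ⟨hpre 0 (Nat.succ_pos _), ⟨k', fun j hj => ?_, ?_⟩⟩
      · have := hpre (j + 1) (by omega)
        simpa [consAddr, shiftIter] using this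
      · simpa [consAddr, shiftIter] using hk
  · rintro (h | ⟨h0, k, hpre, hk⟩)
    · exact ⟨0, by omega, h⟩
    · refine ⟨k + 1, fun j hj => ?_, ?_⟩
      · cases j with
        | zero => exact h0
        | succ j' =>
          have := hpre j' (by omega)
          simpa [consAddr, shiftIter] using this
      · simpa [consAddr, shiftIter] using hk

lemma shiftIter_one_shiftIter (r : Addr) (k : ℕ) :
    shiftIter (shiftIter r k) 1 = shiftIter r (k + 1) := by
  rw [shiftIter_shiftIter, Nat.add_comm]

lemma shiftIter_zero_apply (r : Addr) (k : ℕ) : shiftIter r k 0 = r k := by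
  show r (0 + k) = r k
  rw [Nat.zero_add]

end Stmt4Aux
namespace Stmt4Aux

lemma cons_eq_shift {r : Addr} {k : ℕ} {j : ℤ} (hh : r k = ic j)
    (ht : shiftIter r (k + 1) = s') : shiftIter r k = consAddr (ic j) s' := by
  funext e
  cases e with
  | zero => rw [shiftIter_zero_apply]; exact hh
  | succ e' =>
    show r (e' + 1 + k) = s' e'
    have : shiftIter r (k + 1) e' = s' e' := by rw [ht]
    rw [← this]
    show r (e' + 1 + k) = r (e' + (k + 1))
    ring_nf

lemma shift_eq_of_eq_cons {r : Addr} {k : ℕ} {x : Entry} {s' : Addr}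
    (h : shiftIter r k = consAddr x s') : shiftIter r (k + 1) = s' := by
  rw [← shiftIter_one_shiftIter, h, shiftIter_consAddr]

lemma itin_eq_int_of_gt (s r : Addr) (k : ℕ) (j : ℤ) (hh : r k = ic j)
    (ht : addrLt s (shiftIter r (k + 1))) : itin s r k = ItinEntry.int j := by
  have h0 : shiftIter r k 0 = ic j := by rw [shiftIter_zero_apply]; exact hh
  have h1 : shiftIter r k ≠ topAddr := by
    intro hc
    have : shiftIter r k 0 = (⊤ : Entry) := by rw [hc]; rfl
    rw [h0] at this
    exact ic_ne_top j this
  have h2 : ¬ ∃ j' : ℤ, shiftIter r k = consAddr ((j' : ℝ) : Entry) s := by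
    rintro ⟨j', hj'⟩
    have hts : shiftIter r (k + 1) = s := shift_eq_of_eq_cons hj'
    rw [hts] at ht
    exact addrLt_irrefl s ht
  have h3 : ∃ j' : ℤ, addrLt (consAddr ((j' : ℝ) : Entry) s) (shiftIter r k) ∧
      addrLt (shiftIter r k) (consAddr (((j' + 1 : ℤ) : ℝ) : Entry) s) := by
    refine ⟨j, ?_, ?_⟩
    · rw [cons_lt_iff]
      exact Or.inr ⟨h0.symm, by rw [shiftIter_one_shiftIter]; exact ht⟩
    · rw [lt_cons_iff]
      exact Or.inl (by rw [h0]; exact ic_lt_ic.mpr (by omega))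
  have huniq : ∀ j' : ℤ, (addrLt (consAddr (ic j') s) (shiftIter r k) ∧
      addrLt (shiftIter r k) (consAddr (ic (j' + 1)) s)) → j' = j := by
    rintro j' ⟨hl, hu⟩
    rw [cons_lt_iff] at hl
    rcases hl with hl | ⟨hl0, _⟩
    · rw [h0] at hl
      have hjj : j' < j := ic_lt_ic.mp hl
      rw [lt_cons_iff] at hu
      rcases hu with hu | ⟨_, hu1⟩
      · rw [h0] at hu
        have : j < j' + 1 := ic_lt_ic.mp hu
        omega
      · rw [shiftIter_one_shiftIter] at hu1
        exact (addrLt_asymm ht hu1).elim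
    · rw [h0] at hl0
      exact ic_inj hl0
  have hch : h3.choose = j := huniq h3.choose h3.choose_spec
  unfold itin
  rw [if_neg h1, dif_neg h2, dif_pos h3, hch]

lemma itin_eq_int_of_lt (s r : Addr) (k : ℕ) (j : ℤ) (hh : r k = ic j)
    (ht : addrLt (shiftIter r (k + 1)) s) : itin s r k = ItinEntry.int (j - 1) := by
  have h0 : shiftIter r k 0 = ic j := by rw [shiftIter_zero_apply]; exact hh
  have h1 : shiftIter r k ≠ topAddr := by
    intro hc
    have : shiftIter r k 0 = (⊤ : Entry) := by rw [hc]; rfl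
    rw [h0] at this
    exact ic_ne_top j this
  have h2 : ¬ ∃ j' : ℤ, shiftIter r k = consAddr ((j' : ℝ) : Entry) s := by
    rintro ⟨j', hj'⟩
    have hts : shiftIter r (k + 1) = s := shift_eq_of_eq_cons hj'
    rw [hts] at ht
    exact addrLt_irrefl s ht
  have h3 : ∃ j' : ℤ, addrLt (consAddr ((j' : ℝ) : Entry) s) (shiftIter r k) ∧
      addrLt (shiftIter r k) (consAddr (((j' + 1 : ℤ) : ℝ) : Entry) s) := by
    refine ⟨j - 1, ?_, ?_⟩
    · rw [cons_lt_iff]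
      exact Or.inl (by rw [h0]; exact ic_lt_ic.mpr (by omega))
    · rw [lt_cons_iff]
      refine Or.inr ⟨?_, by rw [shiftIter_one_shiftIter]; exact ht⟩
      rw [h0]
      congr 1
      omega
  have huniq : ∀ j' : ℤ, (addrLt (consAddr (ic j') s) (shiftIter r k) ∧
      addrLt (shiftIter r k) (consAddr (ic (j' + 1)) s)) → j' = j - 1 := by
    rintro j' ⟨hl, hu⟩
    rw [cons_lt_iff] at hl
    rcases hl with hl | ⟨hl0, hl1⟩
    · rw [h0] at hl
      have hjj : j' < j := ic_lt_ic.mp hl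
      rw [lt_cons_iff] at hu
      rcases hu with hu | ⟨hu0, _⟩
      · rw [h0] at hu
        have : j < j' + 1 := ic_lt_ic.mp hu
        omega
      · rw [h0] at hu0
        have := ic_inj hu0
        omega
    · rw [shiftIter_one_shiftIter] at hl1
      exact (addrLt_asymm ht hl1).elim
  have hch : h3.choose = j - 1 := huniq h3.choose h3.choose_spec
  unfold itin
  rw [if_neg h1, dif_neg h2, dif_pos h3, hch]

lemma itin_eq_bdy (s r : Addr) (k : ℕ) (j : ℤ) (hh : r k = ic j)
    (ht : shiftIter r (k + 1) = s) : itin s r k = ItinEntry.bdy j := by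
  have h0 : shiftIter r k 0 = ic j := by rw [shiftIter_zero_apply]; exact hh
  have h1 : shiftIter r k ≠ topAddr := by
    intro hc
    have : shiftIter r k 0 = (⊤ : Entry) := by rw [hc]; rfl
    rw [h0] at this
    exact ic_ne_top j this
  have h2 : ∃ j' : ℤ, shiftIter r k = consAddr ((j' : ℝ) : Entry) s :=
    ⟨j, cons_eq_shift hh ht⟩
  have hch : h2.choose = j := by
    have hspec := h2.choose_spec
    have : shiftIter r k 0 = ic h2.choose := congrFun hspec 0
    rw [h0] at this
    exact (ic_inj this).symm
  unfold itin
  rw [if_neg h1, dif_pos h2, hch]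

end Stmt4Aux
namespace Stmt4Aux

/-- `r` is a (strict) solution for the itinerary `u'` shifted by `c`. -/
def Sol (s : Addr) (u' : ℕ → ℤ) (c : ℕ) (r : ℕ → ℤ) : Prop :=
  ∀ k, (r k = u' (k + c) ∧ addrLt s (shiftIter (toAddr r) (k + 1)))
     ∨ (r k = u' (k + c) + 1 ∧ addrLt (shiftIter (toAddr r) (k + 1)) s)

lemma itin_of_sol {s : Addr} {u' : ℕ → ℤ} {r : ℕ → ℤ} (hsol : Sol s u' 0 r) :
    ∀ k, itin s (toAddr r) k = ItinEntry.int (u' k) := by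
  intro k
  rcases hsol k with ⟨he, ht⟩ | ⟨he, ht⟩
  · have hh : toAddr r k = ic (u' (k + 0)) := by unfold toAddr ic; rw [he]
    rw [Nat.add_zero] at hh
    exact itin_eq_int_of_gt s (toAddr r) k (u' k) hh ht
  · have hh : toAddr r k = ic (u' (k + 0) + 1) := by unfold toAddr ic; rw [he]
    rw [Nat.add_zero] at hh
    have := itin_eq_int_of_lt s (toAddr r) k (u' k + 1) hh ht
    rw [this]
    congr 1
    omega

lemma sol_of_itin {s : Addr} {u' : ℕ → ℤ} {r : ℕ → ℤ}
    (h : ∀ k, itin s (toAddr r) k = ItinEntry.int (u' k)) : Sol s u' 0 r := by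
  intro k
  have hk := h k
  unfold itin at hk
  by_cases h1 : shiftIter (toAddr r) k = topAddr
  · rw [if_pos h1] at hk
    exact ItinEntry.noConfusion hk
  rw [if_neg h1] at hk
  by_cases h2 : ∃ j' : ℤ, shiftIter (toAddr r) k = consAddr ((j' : ℝ) : Entry) s
  · rw [dif_pos h2] at hk
    exact ItinEntry.noConfusion hk
  rw [dif_neg h2] at hk
  by_cases h3 : ∃ j' : ℤ, addrLt (consAddr ((j' : ℝ) : Entry) s) (shiftIter (toAddr r) k) ∧
      addrLt (shiftIter (toAddr r) k) (consAddr (((j' + 1 : ℤ) : ℝ) : Entry) s)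
  · rw [dif_pos h3] at hk
    have hc : h3.choose = u' k := by
      have := hk
      injection this
    have hspec := h3.choose_spec
    rw [hc] at hspec
    obtain ⟨hl, hu⟩ := hspec
    rw [cons_lt_iff] at hl
    rw [lt_cons_iff] at hu
    rw [shiftIter_zero_apply, shiftIter_one_shiftIter] at hl hu
    have hhead : toAddr r k = ic (r k) := rfl
    rw [hhead] at hl hu
    rcases hl with hl | ⟨hl0, hl1⟩
    · rcases hu with hu | ⟨hu0, hu1⟩
      · have := ic_lt_ic.mp hl
        have := ic_lt_ic.mp hu
        omega
      · exact Or.inr ⟨ic_inj hu0, hu1⟩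
    · exact Or.inl ⟨(ic_inj hl0).symm, hl1⟩
  · rw [dif_neg h3] at hk
    exact ItinEntry.noConfusion hk

end Stmt4Aux
namespace Stmt4Aux

/-- `Q s u' c F`: there is a quasi-solution (relations valid below `F`) for the
itinerary `u'` shifted by `c` which agrees with `s` on the first `F` entries. -/
def Q (s : Addr) (u' : ℕ → ℤ) (c F : ℕ) : Prop :=
  ∃ γ : ℕ → ℤ, (∀ e, e < F → ic (γ e) = s e) ∧
    ∀ i, i < F →
      (γ i = u' (i + c) ∧ ¬ addrLt (shiftIter (toAddr γ) (i + 1)) s) ∨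
      (γ i = u' (i + c) + 1 ∧ addrLt (shiftIter (toAddr γ) (i + 1)) s)

lemma Q_mono {s : Addr} {u' : ℕ → ℤ} {c F F' : ℕ} (h : F ≤ F') (hQ : Q s u' c F') :
    Q s u' c F := by
  obtain ⟨γ, h1, h2⟩ := hQ
  exact ⟨γ, fun e he => h1 e (lt_of_lt_of_le he h), fun i hi => h2 i (lt_of_lt_of_le hi h)⟩

lemma not_forall_Q {s : Addr} {u' : ℕ → ℤ} {p : ℕ}
    (hp : 1 ≤ p) (hu'per : ∀ k, u' (k + p) = u' k)
    (hKp : ∀ k, 1 ≤ k → (fun j => ItinEntry.int (u' (j + k))) ≠ itinPlus s s)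
    (hKm : ∀ k, 1 ≤ k → (fun j => ItinEntry.int (u' (j + k))) ≠ itinMinus s s)
    (c : ℕ) : ¬ (∀ F, Q s u' c F) := by
  classical
  intro hQ
  -- the entries of s follow the pattern of u' (shifted by c)
  have hent : ∀ k, ∃ m : ℤ, s k = ic m ∧ (m = u' (k + c) ∨ m = u' (k + c) + 1) := by
    intro k
    obtain ⟨γ, hpre, hrel⟩ := hQ (k + 1)
    have h1 : ic (γ k) = s k := hpre k (by omega)
    rcases hrel k (by omega) with ⟨he, _⟩ | ⟨he, _⟩
    · exact ⟨γ k, h1.symm, Or.inl he⟩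
    · exact ⟨γ k, h1.symm, Or.inr he⟩
  set sZ : ℕ → ℤ := fun k => (hent k).choose with hsZdef
  have hsZ : ∀ k, s k = ic (sZ k) ∧ (sZ k = u' (k + c) ∨ sZ k = u' (k + c) + 1) :=
    fun k => (hent k).choose_spec
  -- relaxed relations for s itself
  have hrel0 : ∀ k, sZ k = u' (k + c) → ¬ addrLt (shiftIter s (k + 1)) s := by
    intro k he hlt
    obtain ⟨e, hpree, hke⟩ := hlt
    obtain ⟨γ, hpre, hrel⟩ := hQ (k + 1 + e + 1)
    have hgk : γ k = sZ k := ic_inj (by rw [hpre k (by omega), (hsZ k).1])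
    rcases hrel k (by omega) with ⟨_, hnot⟩ | ⟨he2, _⟩
    · apply hnot
      refine ⟨e, fun jj hj => ?_, ?_⟩
      · show ic (γ (jj + (k + 1))) = s jj
        rw [hpre _ (by omega)]
        exact hpree jj hj
      · show ic (γ (e + (k + 1))) < s e
        rw [hpre _ (by omega)]
        exact hke
    · rw [hgk, he] at he2
      omega
  have hrel1 : ∀ k, sZ k = u' (k + c) + 1 → ¬ addrLt s (shiftIter s (k + 1)) := by
    intro k he hlt
    obtain ⟨e, hpree, hke⟩ := hlt
    obtain ⟨γ, hpre, hrel⟩ := hQ (k + 1 + e + 1)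
    have hgk : γ k = sZ k := ic_inj (by rw [hpre k (by omega), (hsZ k).1])
    rcases hrel k (by omega) with ⟨he2, _⟩ | ⟨_, hstrict⟩
    · rw [hgk, he] at he2
      omega
    · apply addrLt_asymm _ hstrict
      refine ⟨e, fun jj hj => ?_, ?_⟩
      · show s jj = ic (γ (jj + (k + 1)))
        rw [hpre _ (by omega)]
        exact hpree jj hj
      · show s e < ic (γ (e + (k + 1)))
        rw [hpre _ (by omega)]
        exact hke
  -- case: mixed boundary types
  by_cases Hmix : ∃ a b : ℕ, shiftIter s (a + 1) = s ∧ shiftIter s (b + 1) = s ∧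
      sZ a = u' (a + c) ∧ sZ b = u' (b + c) + 1
  · obtain ⟨a, b, hpa, hpb, hta, htb⟩ := Hmix
    set F := max a b + 1 with hF
    obtain ⟨γ, hpre, hrel⟩ := hQ F
    have hne : ∃ e, ic (γ e) ≠ s e := by
      by_contra hc
      push_neg at hc
      have hγs : toAddr γ = s := funext hc
      have hgb : γ b = sZ b := ic_inj (by rw [hc b, (hsZ b).1])
      rcases hrel b (by omega) with ⟨he2, _⟩ | ⟨_, hstrict⟩
      · rw [hgb, htb] at he2
        omega
      · rw [hγs, hpb] at hstrict
        exact addrLt_irrefl s hstrict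
    set F' := Nat.find hne with hF'def
    have hdiff : ic (γ F') ≠ s F' := Nat.find_spec hne
    have hprefix : ∀ e, e < F' → ic (γ e) = s e := by
      intro e he
      by_contra hcc
      exact Nat.find_min hne he hcc
    have hF'ge : F ≤ F' := by
      by_contra hcc
      push_neg at hcc
      exact hdiff (hpre F' (by omega))
    have haF : a + 1 ≤ F' := by omega
    have hbF : b + 1 ≤ F' := by omega
    -- the strict relation at b gives γ F' < s F'
    have hgb : γ b = sZ b := ic_inj (by rw [hpre b (by omega), (hsZ b).1])
    have hstrict : addrLt (shiftIter (toAddr γ) (b + 1)) s := by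
      rcases hrel b (by omega) with ⟨he2, _⟩ | ⟨_, hstrict⟩
      · rw [hgb, htb] at he2; omega
      · exact hstrict
    have hsper : ∀ (m e : ℕ), shiftIter s (m + 1) = s → s (e + (m + 1)) = s e := by
      intro m e hm
      have := congrFun hm e
      exact this
    have hlt : ic (γ F') < s F' := by
      have h1 := addrLt_at hstrict (d := F' - (b + 1)) ?_ ?_
      · have hx : shiftIter (toAddr γ) (b + 1) (F' - (b + 1)) = ic (γ F') := by
          show ic (γ ((F' - (b + 1)) + (b + 1))) = ic (γ F')
          congr 2
          omega
        rw [hx] at h1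
        have hx2 : (F' - (b + 1)) + (b + 1) = F' := by omega
        have hy : s (F' - (b + 1)) = s F' := by
          have hz := hsper b (F' - (b + 1)) hpb
          rw [hx2] at hz
          exact hz.symm
        rw [← hy]
        exact h1
      · intro jj hj
        show ic (γ (jj + (b + 1))) = s jj
        rw [hprefix _ (by omega)]
        exact hsper b jj hpb
      · show ic (γ ((F' - (b + 1)) + (b + 1))) ≠ s (F' - (b + 1))
        have hx : (F' - (b + 1)) + (b + 1) = F' := by omega
        rw [hx]
        have hy : s (F' - (b + 1)) = s F' := by
          have := hsper b (F' - (b + 1)) hpb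
          rw [hx] at this
          exact this.symm
        rw [hy]
        exact hdiff
    -- contradiction with the relaxed relation at a
    have hga : γ a = sZ a := ic_inj (by rw [hpre a (by omega), (hsZ a).1])
    have hnota : ¬ addrLt (shiftIter (toAddr γ) (a + 1)) s := by
      rcases hrel a (by omega) with ⟨_, hnot⟩ | ⟨he2, _⟩
      · exact hnot
      · rw [hga, hta] at he2; omega
    apply hnota
    refine ⟨F' - (a + 1), fun jj hj => ?_, ?_⟩
    · show ic (γ (jj + (a + 1))) = s jj
      rw [hprefix _ (by omega)]
      exact hsper a jj hpa
    · show ic (γ ((F' - (a + 1)) + (a + 1))) < s (F' - (a + 1))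
      have hx : (F' - (a + 1)) + (a + 1) = F' := by omega
      rw [hx]
      have hy : s (F' - (a + 1)) = s F' := by
        have := hsper a (F' - (a + 1)) hpa
        rw [hx] at this
        exact this.symm
      rw [hy]
      exact hlt
  -- unmixed cases
  · push_neg at Hmix
    by_cases hPp : ∀ b : ℕ, shiftIter s (b + 1) = s → sZ b = u' (b + c)
    · -- itin⁺(s) = shifted u
      apply hKp (c + p) (by omega)
      funext k
      have hu'' : u' (k + (c + p)) = u' (k + c) := by
        rw [← Nat.add_assoc]
        exact hu'per (k + c)
      show ItinEntry.int (u' (k + (c + p))) = entryPlus (itin s s k)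
      by_cases hb : shiftIter s (k + 1) = s
      · rw [itin_eq_bdy s s k (sZ k) (hsZ k).1 hb]
        show ItinEntry.int (u' (k + (c + p))) = ItinEntry.int (sZ k)
        rw [hu'', hPp k hb]
      · rcases (hsZ k).2 with hcase | hcase
        · have hnot := hrel0 k hcase
          rcases addr_trichot (shiftIter s (k + 1)) s with h | h | h
          · exact absurd h hnot
          · exact absurd h hb
          · rw [itin_eq_int_of_gt s s k (sZ k) (hsZ k).1 h]
            show ItinEntry.int (u' (k + (c + p))) = ItinEntry.int (sZ k)
            rw [hu'', hcase]
        · have hnot := hrel1 k hcase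
          rcases addr_trichot (shiftIter s (k + 1)) s with h | h | h
          · rw [itin_eq_int_of_lt s s k (sZ k) (hsZ k).1 h]
            show ItinEntry.int (u' (k + (c + p))) = ItinEntry.int (sZ k - 1)
            rw [hu'', hcase]
            congr 1
            omega
          · exact absurd h hb
          · exact absurd h hnot
    · -- itin⁻(s) = shifted u
      push_neg at hPp
      obtain ⟨b0, hb0, hb0ne⟩ := hPp
      have hb0m : sZ b0 = u' (b0 + c) + 1 := by
        rcases (hsZ b0).2 with h | h
        · exact absurd h hb0ne
        · exact h
      have hPm : ∀ a : ℕ, shiftIter s (a + 1) = s → sZ a = u' (a + c) + 1 := by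
        intro a ha
        rcases (hsZ a).2 with h | h
        · exact absurd hb0m (Hmix a b0 ha hb0 h)
        · exact h
      apply hKm (c + p) (by omega)
      funext k
      have hu'' : u' (k + (c + p)) = u' (k + c) := by
        rw [← Nat.add_assoc]
        exact hu'per (k + c)
      show ItinEntry.int (u' (k + (c + p))) = entryMinus (itin s s k)
      by_cases hb : shiftIter s (k + 1) = s
      · rw [itin_eq_bdy s s k (sZ k) (hsZ k).1 hb]
        show ItinEntry.int (u' (k + (c + p))) = ItinEntry.int (sZ k - 1)
        rw [hu'', hPm k hb]
        congr 1
        omega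
      · rcases (hsZ k).2 with hcase | hcase
        · have hnot := hrel0 k hcase
          rcases addr_trichot (shiftIter s (k + 1)) s with h | h | h
          · exact absurd h hnot
          · exact absurd h hb
          · rw [itin_eq_int_of_gt s s k (sZ k) (hsZ k).1 h]
            show ItinEntry.int (u' (k + (c + p))) = ItinEntry.int (sZ k)
            rw [hu'', hcase]
        · have hnot := hrel1 k hcase
          rcases addr_trichot (shiftIter s (k + 1)) s with h | h | h
          · rw [itin_eq_int_of_lt s s k (sZ k) (hsZ k).1 h]
            show ItinEntry.int (u' (k + (c + p))) = ItinEntry.int (sZ k - 1)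
            rw [hu'', hcase]
            congr 1
            omega
          · exact absurd h hb
          · exact absurd h hnot

end Stmt4Aux
namespace Stmt4Aux

section ND
variable {s : Addr} {u' : ℕ → ℤ} {p : ℕ}

lemma u'_add_mul (hu'per : ∀ k, u' (k + p) = u' k) (k t : ℕ) : u' (k + p * t) = u' k := by
  induction t with
  | zero => simp
  | succ t ih =>
    have : k + p * (t + 1) = (k + p * t) + p := by ring
    rw [this, hu'per, ih]

lemma u'_congr (hu'per : ∀ k, u' (k + p) = u' k) {a b : ℕ} (h : a % p = b % p) :
    u' a = u' b := by
  have ha : u' a = u' (a % p) := by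
    conv_lhs => rw [← Nat.mod_add_div a p]
    exact u'_add_mul hu'per _ _
  have hb : u' b = u' (b % p) := by
    conv_lhs => rw [← Nat.mod_add_div b p]
    exact u'_add_mul hu'per _ _
  rw [ha, hb, h]

lemma Q_shift_class (hu'per : ∀ k, u' (k + p) = u' k) {c c' F : ℕ}
    (h : c % p = c' % p) (hQ : Q s u' c F) : Q s u' c' F := by
  obtain ⟨γ, h1, h2⟩ := hQ
  refine ⟨γ, h1, fun i hi => ?_⟩
  have hu : u' (i + c) = u' (i + c') := u'_congr hu'per (by
    rw [Nat.add_mod, h, ← Nat.add_mod])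
  rcases h2 i hi with ⟨ha, hb⟩ | ⟨ha, hb⟩
  · exact Or.inl ⟨by rw [← hu]; exact ha, hb⟩
  · exact Or.inr ⟨by rw [← hu]; exact ha, hb⟩

lemma exists_N (hp : 1 ≤ p) (hu'per : ∀ k, u' (k + p) = u' k)
    (hKp : ∀ k, 1 ≤ k → (fun j => ItinEntry.int (u' (j + k))) ≠ itinPlus s s)
    (hKm : ∀ k, 1 ≤ k → (fun j => ItinEntry.int (u' (j + k))) ≠ itinMinus s s) :
    ∃ N, ∀ c, ¬ Q s u' c N := by
  classical
  have h1 : ∀ c, ∃ F, ¬ Q s u' c F := by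
    intro c
    by_contra hc
    push_neg at hc
    exact not_forall_Q hp hu'per hKp hKm c fun F => hc F
  choose Ff hFf using h1
  refine ⟨(Finset.range p).sup Ff, fun c hQN => ?_⟩
  apply hFf (c % p)
  have hle : Ff (c % p) ≤ (Finset.range p).sup Ff :=
    Finset.le_sup (Finset.mem_range.mpr (Nat.mod_lt _ (by omega)))
  exact Q_mono hle (Q_shift_class hu'per (Nat.mod_mod_of_dvd c dvd_rfl).symm hQN)

lemma sol_first_diff {N : ℕ} (hN : ∀ c, ¬ Q s u' c N) {c : ℕ} {γ : ℕ → ℤ}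
    (hsol : Sol s u' c γ) :
    ∃ d, d < N ∧ (∀ e, e < d → ic (γ e) = s e) ∧ ic (γ d) ≠ s d ∧
      (addrLt (toAddr γ) s ↔ ic (γ d) < s d) := by
  classical
  have hrels : ∀ i, i < N →
      (γ i = u' (i + c) ∧ ¬ addrLt (shiftIter (toAddr γ) (i + 1)) s) ∨
      (γ i = u' (i + c) + 1 ∧ addrLt (shiftIter (toAddr γ) (i + 1)) s) := by
    intro i _
    rcases hsol i with ⟨ha, hb⟩ | ⟨ha, hb⟩
    · exact Or.inl ⟨ha, fun h => addrLt_asymm h hb⟩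
    · exact Or.inr ⟨ha, hb⟩
  have hne : ∃ e, ic (γ e) ≠ s e := by
    by_contra hc
    push_neg at hc
    exact hN c ⟨γ, fun e _ => hc e, hrels⟩
  have hbdd : ∃ e, e < N ∧ ic (γ e) ≠ s e := by
    by_contra hc
    push_neg at hc
    exact hN c ⟨γ, fun e he => hc e he, hrels⟩
  obtain ⟨e0, he0N, he0⟩ := hbdd
  refine ⟨Nat.find hne, ?_, ?_, Nat.find_spec hne, ?_⟩
  · exact lt_of_le_of_lt (Nat.find_min' hne he0) he0N
  · intro e he
    by_contra hcc
    exact Nat.find_min hne he hcc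
  · constructor
    · intro h
      exact addrLt_at h (fun j hj => by
        by_contra hcc
        exact Nat.find_min hne hj hcc) (Nat.find_spec hne)
    · intro h
      exact ⟨Nat.find hne, fun j hj => by
        by_contra hcc
        exact Nat.find_min hne hj hcc, h⟩

end ND
end Stmt4Aux
namespace Stmt4Aux

section ND2
variable {s : Addr} {u' : ℕ → ℤ} {p : ℕ}

lemma sol_tail {c : ℕ} {rz : ℕ → ℤ} (hsol : Sol s u' c rz) (m : ℕ) :
    Sol s u' (c + m) (fun e => rz (e + m)) := by
  intro k
  have htail : toAddr (fun e => rz (e + m)) = shiftIter (toAddr rz) m := rfl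
  have hsh : shiftIter (toAddr (fun e => rz (e + m))) (k + 1)
      = shiftIter (toAddr rz) ((k + m) + 1) := by
    rw [htail, shiftIter_shiftIter, show k + 1 + m = k + m + 1 from by omega]
  have hidx : u' ((k + m) + c) = u' (k + (c + m)) := by
    congr 1
    omega
  rcases hsol (k + m) with ⟨ha, hb⟩ | ⟨ha, hb⟩
  · exact Or.inl ⟨by simpa [hidx] using ha, by rw [hsh]; exact hb⟩
  · exact Or.inr ⟨by rw [← hidx]; exact ha, by rw [hsh]; exact hb⟩

lemma sol_periodic (hp : 1 ≤ p) (hu'per : ∀ k, u' (k + p) = u' k)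
    {N : ℕ} (hN : ∀ c, ¬ Q s u' c N) {rz : ℕ → ℤ} (hsol : Sol s u' 0 rz) :
    ∃ d, 1 ≤ d ∧ shiftIter (toAddr rz) d = toAddr rz := by
  classical
  have hN1 : 1 ≤ N := by
    rcases Nat.eq_zero_or_pos N with h0 | h1
    · exfalso
      exact hN 0 ⟨fun _ => 0, fun e he => by omega, fun i hi => by omega⟩
    · exact h1
  set ε : ℕ → Bool := fun k => decide (rz k = u' (k + 0) + 1) with hεdef
  have rz_repr : ∀ j, rz j = u' (j + 0) + (if ε j then 1 else 0) := by
    intro j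
    rcases hsol j with ⟨ha, _⟩ | ⟨ha, _⟩
    · have hf : ε j = false := by
        simp only [hεdef, decide_eq_false_iff_not]
        omega
      rw [hf, ha]
      simp
    · have hf : ε j = true := by
        simp only [hεdef, decide_eq_true_eq]
        exact ha
      rw [hf, ha]
      simp
  have eps_iff : ∀ k, (ε k = true ↔ addrLt (shiftIter (toAddr rz) (k + 1)) s) := by
    intro k
    rcases hsol k with ⟨ha, hb⟩ | ⟨ha, hb⟩
    · constructor
      · intro h
        rw [hεdef] at h
        simp only [decide_eq_true_eq] at h
        omega
      · intro h
        exact absurd h (fun h' => addrLt_asymm h' hb)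
    · exact ⟨fun _ => hb, fun _ => by simp only [hεdef, decide_eq_true_eq]; exact ha⟩
  -- window determinism
  have window : ∀ k k', (k + 1) % p = (k' + 1) % p →
      (∀ e, e < N → ε (e + (k + 1)) = ε (e + (k' + 1))) → ε k = ε k' := by
    intro k k' hmod hw
    set γ : ℕ → ℤ := fun e => rz (e + (k + 1)) with hγdef
    set γ' : ℕ → ℤ := fun e => rz (e + (k' + 1)) with hγ'def
    have hs1 : Sol s u' (0 + (k + 1)) γ := sol_tail hsol (k + 1)
    have hs2 : Sol s u' (0 + (k' + 1)) γ' := sol_tail hsol (k' + 1)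
    obtain ⟨d, hdN, hdpre, hdne, hdiff⟩ := sol_first_diff hN hs1
    obtain ⟨d', hdN', hdpre', hdne', hdiff'⟩ := sol_first_diff hN hs2
    have hent : ∀ e, e < N → γ e = γ' e := by
      intro e he
      have h1 := rz_repr (e + (k + 1))
      have h2 := rz_repr (e + (k' + 1))
      have hu : u' (e + (k + 1) + 0) = u' (e + (k' + 1) + 0) := by
        apply u'_congr hu'per
        simp only [Nat.add_zero]
        rw [Nat.add_mod, hmod, ← Nat.add_mod]
      show rz (e + (k + 1)) = rz (e + (k' + 1))
      rw [h1, h2, hu, hw e he]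
    have hdd : d = d' := by
      rcases lt_trichotomy d d' with h | h | h
      · exact absurd (by rw [hent d (by omega)]; exact hdpre' d h) hdne
      · exact h
      · exact absurd (by rw [← hent d' (by omega)]; exact hdpre d' h) hdne'
    have hiff : ε k = true ↔ ε k' = true := by
      rw [eps_iff k, eps_iff k']
      have e1 : shiftIter (toAddr rz) (k + 1) = toAddr γ := rfl
      have e2 : shiftIter (toAddr rz) (k' + 1) = toAddr γ' := rfl
      rw [e1, e2, hdiff, hdiff', hdd, hent d' (by omega)]
    cases hk : ε k <;> cases hk' : ε k' <;> simp_all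
  -- finite state dynamics
  set A := Fintype.card ((Fin N → Bool) × Fin p) with hAdef
  set St : ℕ → (Fin N → Bool) × Fin p :=
    fun k => (fun e => ε (e.val + k), ⟨k % p, Nat.mod_lt _ (by omega)⟩) with hStdef
  have hstep : ∀ k k', St (k + 1) = St (k' + 1) → St k = St k' := by
    intro k k' h
    have hfst := congrArg Prod.fst h
    have hsnd := congrArg Prod.snd h
    simp only [hStdef] at hfst hsnd
    have hmod : (k + 1) % p = (k' + 1) % p := by
      have := congrArg Fin.val hsnd
      exact this
    have hw : ∀ e, e < N → ε (e + (k + 1)) = ε (e + (k' + 1)) := by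
      intro e he
      have := congrFun hfst ⟨e, he⟩
      exact this
    have hε0 : ε k = ε k' := window k k' hmod hw
    have hm0 : k % p = k' % p := by
      have h1 : k + 1 ≡ k' + 1 [MOD p] := hmod
      exact Nat.ModEq.add_right_cancel' 1 h1
    apply Prod.ext
    · funext e
      rcases Nat.eq_zero_or_pos e.val with he0 | hepos
      · show ε (e.val + k) = ε (e.val + k')
        rw [he0, Nat.zero_add, Nat.zero_add]
        exact hε0
      · show ε (e.val + k) = ε (e.val + k')
        have hv : e.val - 1 < N := by omega
        have := hw (e.val - 1) hv
        have i1 : e.val - 1 + (k + 1) = e.val + k := by omega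
        have i2 : e.val - 1 + (k' + 1) = e.val + k' := by omega
        rw [i1, i2] at this
        exact this
    · exact Fin.ext hm0
  have hback : ∀ k d, St k = St (k + d) → ∀ i, i ≤ k → St (k - i) = St (k - i + d) := by
    intro k d h i
    induction i with
    | zero => intro _; simpa using h
    | succ i ih =>
      intro hik
      have hIH := ih (by omega)
      have e1 : k - (i + 1) + 1 = k - i := by omega
      have e2 : k - (i + 1) + d + 1 = k - i + d := by omega
      apply hstep
      rw [e1, e2]
      exact hIH
  have hrep : ∀ R, ∃ d, 1 ≤ d ∧ d ≤ A ∧ ∀ j, j ≤ R → St j = St (j + d) := by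
    intro R
    have hcard : Fintype.card ((Fin N → Bool) × Fin p) < Fintype.card (Fin (A + 1)) := by
      rw [Fintype.card_fin]
      omega
    obtain ⟨x, y, hxy, hfeq⟩ :=
      Fintype.exists_ne_map_eq_of_card_lt (fun i : Fin (A + 1) => St (R + i.val)) hcard
    have hvalne : x.val ≠ y.val := fun h => hxy (Fin.ext h)
    rcases Nat.lt_or_ge x.val y.val with hlt | hge
    · refine ⟨y.val - x.val, by omega, by have := y.isLt; omega, ?_⟩
      intro j hj
      have hkey : St (R + x.val) = St ((R + x.val) + (y.val - x.val)) := by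
        have : (R + x.val) + (y.val - x.val) = R + y.val := by omega
        rw [this]
        exact hfeq
      have := hback (R + x.val) (y.val - x.val) hkey (R + x.val - j) (by omega)
      have e1 : R + x.val - (R + x.val - j) = j := by omega
      rw [e1] at this
      exact this
    · have hlt : y.val < x.val := by omega
      refine ⟨x.val - y.val, by omega, by have := x.isLt; omega, ?_⟩
      intro j hj
      have hkey : St (R + y.val) = St ((R + y.val) + (x.val - y.val)) := by
        have : (R + y.val) + (x.val - y.val) = R + x.val := by omega
        rw [this]
        exact hfeq.symm
      have := hback (R + y.val) (x.val - y.val) hkey (R + y.val - j) (by omega)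
      have e1 : R + y.val - (R + y.val - j) = j := by omega
      rw [e1] at this
      exact this
  -- conclusion
  by_contra hcon
  push_neg at hcon
  have hwit : ∀ d, 1 ≤ d → ∃ j, St j ≠ St (j + d) := by
    intro d hd
    by_contra hcc
    push_neg at hcc
    apply hcon d hd
    have hent : ∀ j, rz (j + d) = rz j := by
      intro j
      have h := hcc j
      have hε : ε j = ε (j + d) := by
        have := congrFun (congrArg Prod.fst h) ⟨0, by omega⟩
        simpa [hStdef] using this
      have hm : j % p = (j + d) % p := congrArg Fin.val (congrArg Prod.snd h)
      have h1 := rz_repr j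
      have h2 := rz_repr (j + d)
      have hu : u' (j + d + 0) = u' (j + 0) := by
        apply u'_congr hu'per
        simp only [Nat.add_zero]
        exact hm.symm
      rw [h1, h2, hu, hε]
    funext e
    show ic (rz (e + d)) = ic (rz e)
    rw [hent e]
  set jfun : ℕ → ℕ := fun d => if h : 1 ≤ d then (hwit d h).choose else 0 with hjdef
  set R := (Finset.range (A + 1)).sup jfun with hRdef
  obtain ⟨d, hd1, hdA, hall⟩ := hrep R
  have hjR : jfun d ≤ R := Finset.le_sup (Finset.mem_range.mpr (by omega))
  have hspec : St (jfun d) ≠ St (jfun d + d) := by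
    have : jfun d = (hwit d hd1).choose := by rw [hjdef]; simp [hd1]
    rw [this]
    exact (hwit d hd1).choose_spec
  exact hspec (hall (jfun d) hjR)

end ND2
end Stmt4Aux
namespace Stmt4Aux

lemma exists_exact_period (a : Addr) {d : ℕ} (hd : 1 ≤ d) (h : shiftIter a d = a) :
    ∃ n, PeriodicAddr a n := by
  classical
  have hex : ∃ m, 1 ≤ m ∧ shiftIter a m = a := ⟨d, hd, h⟩
  refine ⟨Nat.find hex, (Nat.find_spec hex).1, (Nat.find_spec hex).2, ?_⟩
  intro m hm1 hmlt hme
  exact Nat.find_min hex hmlt ⟨hm1, hme⟩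

open Classical in
/-- finite-depth approximate solutions, built backwards from depth `D`. -/
def tailSeq (s : Addr) (u' : ℕ → ℤ) (D i e : ℕ) : ℤ :=
  if h : D + 1 ≤ i then u' (e + i)
  else if e = 0 then
    u' i + (if addrLt (toAddr (fun e' => tailSeq s u' D (i + 1) e')) s then 1 else 0)
  else tailSeq s u' D (i + 1) (e - 1)
termination_by D + 1 - i
decreasing_by all_goals omega

section Build
variable {s : Addr} {u' : ℕ → ℤ} {p : ℕ}

lemma tailSeq_big {D i e : ℕ} (h : D + 1 ≤ i) : tailSeq s u' D i e = u' (e + i) := by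
  rw [tailSeq, dif_pos h]

open Classical in
lemma tailSeq_zero {D i : ℕ} (h : i ≤ D) : tailSeq s u' D i 0 =
    u' i + (if addrLt (toAddr (fun e' => tailSeq s u' D (i + 1) e')) s then 1 else 0) := by
  rw [tailSeq, dif_neg (by omega), if_pos rfl]

lemma tailSeq_succ {D i : ℕ} (h : i ≤ D) (e : ℕ) :
    tailSeq s u' D i (e + 1) = tailSeq s u' D (i + 1) e := by
  rw [tailSeq, dif_neg (by omega), if_neg (by omega)]
  rfl

lemma tailSeq_shift {D : ℕ} (i : ℕ) (h : i ≤ D + 1) :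
    shiftIter (toAddr (fun e => tailSeq s u' D 0 e)) i
      = toAddr (fun e => tailSeq s u' D i e) := by
  induction i with
  | zero => rw [shiftIter_zero]
  | succ i ih =>
    have hiD : i ≤ D := by omega
    funext e
    have h1 := congrFun (ih (by omega)) (e + 1)
    have h2 : tailSeq s u' D i (e + 1) = tailSeq s u' D (i + 1) e := tailSeq_succ hiD e
    show toAddr (fun e => tailSeq s u' D 0 e) (e + (i + 1)) = ic (tailSeq s u' D (i + 1) e)
    have h3 : toAddr (fun e => tailSeq s u' D 0 e) (e + (i + 1))
        = shiftIter (toAddr (fun e => tailSeq s u' D 0 e)) i (e + 1) := by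
      show toAddr _ (e + (i + 1)) = toAddr _ (e + 1 + i)
      congr 1
      omega
    rw [h3, h1]
    show ic (tailSeq s u' D i (e + 1)) = ic (tailSeq s u' D (i + 1) e)
    rw [h2]

lemma tailSeq_entry {D i : ℕ} (h : i ≤ D) : tailSeq s u' D 0 i = tailSeq s u' D i 0 := by
  have h1 := congrFun (tailSeq_shift (s := s) (u' := u') (D := D) i (by omega)) 0
  have h2 : shiftIter (toAddr (fun e => tailSeq s u' D 0 e)) i 0
      = ic (tailSeq s u' D 0 (0 + i)) := rfl
  rw [h2] at h1
  have h3 : ic (tailSeq s u' D 0 (0 + i)) = ic (tailSeq s u' D i 0) := h1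
  have := ic_inj h3
  rw [Nat.zero_add] at this
  exact this

open Classical in
lemma tailSeq_pattern {D i : ℕ} (h : i ≤ D) :
    (tailSeq s u' D i 0 = u' i ∧
      ¬ addrLt (shiftIter (toAddr (fun e => tailSeq s u' D 0 e)) (i + 1)) s) ∨
    (tailSeq s u' D i 0 = u' i + 1 ∧
      addrLt (shiftIter (toAddr (fun e => tailSeq s u' D 0 e)) (i + 1)) s) := by
  have hsh := tailSeq_shift (s := s) (u' := u') (D := D) (i + 1) (by omega)
  rw [tailSeq_zero h]
  by_cases hc : addrLt (toAddr (fun e' => tailSeq s u' D (i + 1) e')) s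
  · right
    rw [if_pos hc, hsh]
    exact ⟨rfl, hc⟩
  · left
    rw [if_neg hc, hsh]
    exact ⟨by omega, hc⟩

end Build
end Stmt4Aux
namespace Stmt4Aux

open Classical in
/-- nested infinite sets of depths, fixing more and more entries -/
def diagSet (s : Addr) (u' : ℕ → ℤ) : ℕ → Set ℕ
  | 0 => Set.univ
  | k + 1 =>
      (diagSet s u' k ∩ {D | k < D}) ∩
        {D | tailSeq s u' D 0 k = u' k +
          (if ((diagSet s u' k ∩ {D | k < D}) ∩
              {D | tailSeq s u' D 0 k = u' k + 1}).Infinite then 1 else 0)}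

open Classical in
def diagBit (s : Addr) (u' : ℕ → ℤ) (k : ℕ) : ℤ :=
  if ((diagSet s u' k ∩ {D | k < D}) ∩
      {D | tailSeq s u' D 0 k = u' k + 1}).Infinite then 1 else 0

section Diag
variable {s : Addr} {u' : ℕ → ℤ} {p : ℕ}

lemma diagSet_succ (k : ℕ) :
    diagSet s u' (k + 1) = (diagSet s u' k ∩ {D | k < D}) ∩
      {D | tailSeq s u' D 0 k = u' k + diagBit s u' k} := rfl

lemma diagBit_mem (k : ℕ) : diagBit s u' k = 0 ∨ diagBit s u' k = 1 := by
  unfold diagBit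
  by_cases h : ((diagSet s u' k ∩ {D | k < D}) ∩
      {D | tailSeq s u' D 0 k = u' k + 1}).Infinite
  · right; rw [if_pos h]
  · left; rw [if_neg h]

lemma diagSet_infinite : ∀ k, (diagSet s u' k).Infinite := by
  intro k
  induction k with
  | zero => exact Set.infinite_univ
  | succ k ih =>
    have hSinf : (diagSet s u' k ∩ {D | k < D}).Infinite := by
      have heq : diagSet s u' k ∩ {D | k < D} = diagSet s u' k \ Set.Iic k := by
        ext D
        simp only [Set.mem_inter_iff, Set.mem_setOf_eq, Set.mem_diff, Set.mem_Iic]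
        constructor
        · rintro ⟨h1, h2⟩; exact ⟨h1, by omega⟩
        · rintro ⟨h1, h2⟩; exact ⟨h1, by omega⟩
      rw [heq]
      exact ih.diff (Set.finite_Iic k)
    rw [diagSet_succ]
    set S := diagSet s u' k ∩ {D | k < D} with hS
    by_cases hc : (S ∩ {D | tailSeq s u' D 0 k = u' k + 1}).Infinite
    · have hb : diagBit s u' k = 1 := by unfold diagBit; rw [if_pos hc]
      rw [hb]
      exact hc
    · have hb : diagBit s u' k = 0 := by unfold diagBit; rw [if_neg hc]
      rw [hb]
      intro hfin
      apply hSinf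
      have hsub : S ⊆ (S ∩ {D | tailSeq s u' D 0 k = u' k + 1}) ∪
          (S ∩ {D | tailSeq s u' D 0 k = u' k + 0}) := by
        intro D hD
        have hkD : k < D := hD.2
        have hkD' : k ≤ D := by omega
        have hpat := tailSeq_pattern (s := s) (u' := u') (D := D) (i := k) hkD'
        have hent := tailSeq_entry (s := s) (u' := u') (D := D) (i := k) hkD'
        rcases hpat with ⟨hv, _⟩ | ⟨hv, _⟩
        · right; exact ⟨hD, by rw [Set.mem_setOf_eq, hent, hv]; ring⟩
        · left; exact ⟨hD, by rw [Set.mem_setOf_eq, hent, hv]⟩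
      have h1 : (S ∩ {D | tailSeq s u' D 0 k = u' k + 1}).Finite := Set.not_infinite.mp hc
      exact Set.Finite.subset (h1.union hfin) hsub

lemma diagSet_le {k j : ℕ} (h : j ≤ k) : diagSet s u' k ⊆ diagSet s u' j := by
  induction k with
  | zero =>
    have : j = 0 := by omega
    rw [this]
  | succ k ih =>
    rcases Nat.eq_or_lt_of_le h with h1 | h1
    · rw [h1]
    · have h2 : j ≤ k := by omega
      have : diagSet s u' (k + 1) ⊆ diagSet s u' k := by
        rw [diagSet_succ]
        exact fun D hD => hD.1.1
      exact this.trans (ih h2)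

lemma diag_approx (K : ℕ) : ∃ D, K < D ∧
    ∀ k, k ≤ K → tailSeq s u' D 0 k = u' k + diagBit s u' k := by
  obtain ⟨D, hD⟩ := (diagSet_infinite (s := s) (u' := u') (K + 1)).nonempty
  refine ⟨D, ?_, ?_⟩
  · have : D ∈ diagSet s u' (K + 1) := hD
    rw [diagSet_succ] at this
    exact this.1.2
  · intro k hk
    have hmem : D ∈ diagSet s u' (k + 1) := diagSet_le (by omega) hD
    rw [diagSet_succ] at hmem
    exact hmem.2

lemma diag_relaxed1 {i : ℕ} (hb : diagBit s u' i = 1) :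
    ¬ addrLt s (shiftIter (toAddr (fun k => u' k + diagBit s u' k)) (i + 1)) := by
  set rz : ℕ → ℤ := fun k => u' k + diagBit s u' k with hrz
  intro hgt
  obtain ⟨e, hpre, he⟩ := hgt
  obtain ⟨D, hKD, hagree⟩ := diag_approx (s := s) (u' := u') (i + 1 + e)
  have hiD : i ≤ D := by omega
  have hgt' : addrLt s (shiftIter (toAddr (fun e' => tailSeq s u' D 0 e')) (i + 1)) := by
    refine ⟨e, fun j hj => ?_, ?_⟩
    · have h1 : tailSeq s u' D 0 (j + (i + 1)) = rz (j + (i + 1)) := hagree _ (by omega)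
      show s j = ic (tailSeq s u' D 0 (j + (i + 1)))
      rw [h1]
      exact hpre j hj
    · have h1 : tailSeq s u' D 0 (e + (i + 1)) = rz (e + (i + 1)) := hagree _ (by omega)
      show s e < ic (tailSeq s u' D 0 (e + (i + 1)))
      rw [h1]
      exact he
  rcases tailSeq_pattern (s := s) (u' := u') (D := D) (i := i) hiD with ⟨hv, _⟩ | ⟨_, hlt⟩
  · have hent := tailSeq_entry (s := s) (u' := u') (D := D) (i := i) hiD
    have h1 : tailSeq s u' D 0 i = rz i := hagree _ (by omega)
    have h2 : rz i = u' i + 1 := by rw [hrz]; simp only []; rw [hb]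
    rw [← hent, h1, h2] at hv
    omega
  · exact addrLt_asymm hgt' hlt

lemma diag_relaxed0 {i : ℕ} (hb : diagBit s u' i = 0) :
    ¬ addrLt (shiftIter (toAddr (fun k => u' k + diagBit s u' k)) (i + 1)) s := by
  set rz : ℕ → ℤ := fun k => u' k + diagBit s u' k with hrz
  intro hlt
  obtain ⟨e, hpre, he⟩ := hlt
  obtain ⟨D, hKD, hagree⟩ := diag_approx (s := s) (u' := u') (i + 1 + e)
  have hiD : i ≤ D := by omega
  have hlt' : addrLt (shiftIter (toAddr (fun e' => tailSeq s u' D 0 e')) (i + 1)) s := by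
    refine ⟨e, fun j hj => ?_, ?_⟩
    · have h1 : tailSeq s u' D 0 (j + (i + 1)) = rz (j + (i + 1)) := hagree _ (by omega)
      show ic (tailSeq s u' D 0 (j + (i + 1))) = s j
      rw [h1]
      exact hpre j hj
    · have h1 : tailSeq s u' D 0 (e + (i + 1)) = rz (e + (i + 1)) := hagree _ (by omega)
      show ic (tailSeq s u' D 0 (e + (i + 1))) < s e
      rw [h1]
      exact he
  rcases tailSeq_pattern (s := s) (u' := u') (D := D) (i := i) hiD with ⟨_, hnlt⟩ | ⟨hv, _⟩
  · exact hnlt hlt'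
  · have hent := tailSeq_entry (s := s) (u' := u') (D := D) (i := i) hiD
    have h1 : tailSeq s u' D 0 i = rz i := hagree _ (by omega)
    have h2 : rz i = u' i := by rw [hrz]; simp only []; rw [hb]; ring
    rw [← hent, h1, h2] at hv
    omega

lemma exists_sol (hp : 1 ≤ p) (hu'per : ∀ k, u' (k + p) = u' k)
    (hKp : ∀ k, 1 ≤ k → (fun j => ItinEntry.int (u' (j + k))) ≠ itinPlus s s)
    (hKm : ∀ k, 1 ≤ k → (fun j => ItinEntry.int (u' (j + k))) ≠ itinMinus s s) :
    ∃ rz : ℕ → ℤ, Sol s u' 0 rz := by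
  classical
  set rz : ℕ → ℤ := fun k => u' k + diagBit s u' k with hrz
  have hne : ∀ i, shiftIter (toAddr rz) (i + 1) ≠ s := by
    intro i heq
    apply not_forall_Q hp hu'per hKp hKm (i + 1)
    intro F
    obtain ⟨D, hKD, hagree⟩ := diag_approx (s := s) (u' := u') (i + 1 + F)
    refine ⟨fun e => tailSeq s u' D 0 (e + (i + 1)), fun e heF => ?_, fun i' hi'F => ?_⟩
    · have h1 : tailSeq s u' D 0 (e + (i + 1)) = rz (e + (i + 1)) := hagree _ (by omega)
      show ic (tailSeq s u' D 0 (e + (i + 1))) = s e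
      rw [h1]
      exact congrFun heq e
    · have hidx : i + 1 + i' ≤ D := by omega
      have hpat := tailSeq_pattern (s := s) (u' := u') (D := D) (i := i + 1 + i') hidx
      have hent := tailSeq_entry (s := s) (u' := u') (D := D) (i := i + 1 + i') hidx
      have hγ : toAddr (fun e => tailSeq s u' D 0 (e + (i + 1)))
          = shiftIter (toAddr (fun e' => tailSeq s u' D 0 e')) (i + 1) := rfl
      have hsh : shiftIter (toAddr (fun e => tailSeq s u' D 0 (e + (i + 1)))) (i' + 1)
          = shiftIter (toAddr (fun e' => tailSeq s u' D 0 e')) (i + 1 + i' + 1) := by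
        rw [hγ, shiftIter_shiftIter,
          show i' + 1 + (i + 1) = i + 1 + i' + 1 from by omega]
      have hee : (fun e => tailSeq s u' D 0 (e + (i + 1))) i'
          = tailSeq s u' D 0 (i + 1 + i') := by
        show tailSeq s u' D 0 (i' + (i + 1)) = tailSeq s u' D 0 (i + 1 + i')
        congr 1
        omega
      have huu : u' (i + 1 + i') = u' (i' + (i + 1)) := by congr 1; omega
      rcases hpat with ⟨hv, hnlt⟩ | ⟨hv, hlt⟩
      · left
        constructor
        · rw [hee, hent, hv, huu]
        · rw [hsh]; exact hnlt
      · right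
        constructor
        · rw [hee, hent, hv, huu]
        · rw [hsh]; exact hlt
  refine ⟨rz, fun k => ?_⟩
  rcases diagBit_mem (s := s) (u' := u') k with hb | hb
  · left
    constructor
    · show u' k + diagBit s u' k = u' (k + 0)
      rw [hb, Nat.add_zero]; ring
    · rcases addr_trichot s (shiftIter (toAddr rz) (k + 1)) with h | h | h
      · exact h
      · exact absurd h.symm (hne k)
      · exact absurd h (diag_relaxed0 hb)
  · right
    constructor
    · show u' k + diagBit s u' k = u' (k + 0) + 1
      rw [hb, Nat.add_zero]
    · rcases addr_trichot (shiftIter (toAddr rz) (k + 1)) s with h | h | h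
      · exact h
      · exact absurd h (hne k)
      · exact absurd h (diag_relaxed1 hb)

end Diag
end Stmt4Aux
/-- Let `s ∈ Ṡ` and let `u` be a periodic sequence of integers with
`σ^k(u) ∉ {K⁺(s), K⁻(s)}` for all `k ≥ 1`. Then there is a periodic external address `r`
with `itin_s(r) = u`, and every `r ∈ S̄` with `itin_s(r) = u` is a periodic external
address. -/
theorem stmt4 (s : Addr) (hs : InSDot s) (u : ℕ → ItinEntry)
    (hint : ∀ k, ∃ j : ℤ, u k = ItinEntry.int j)
    (hper : ∃ p, 1 ≤ p ∧ ∀ k, u (k + p) = u k)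
    (hK : ∀ k, 1 ≤ k →
      (fun j => u (j + k)) ≠ itinPlus s s ∧ (fun j => u (j + k)) ≠ itinMinus s s) :
    (∃ r : Addr, IsExtAddr r ∧ (∃ n, PeriodicAddr r n) ∧ itin s r = u) ∧
    (∀ r : Addr, InSBar r → itin s r = u → IsExtAddr r ∧ ∃ n, PeriodicAddr r n) := by
  classical
  open Stmt4Aux in
  obtain ⟨p, hp, hup⟩ := hper
  choose u' hu' using hint
  have hu'per : ∀ k, u' (k + p) = u' k := by
    intro k
    have h1 := hup k
    rw [hu' (k + p), hu' k] at h1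
    injection h1
  have hKp : ∀ k, 1 ≤ k → (fun j => ItinEntry.int (u' (j + k))) ≠ itinPlus s s := by
    intro k hk h
    apply (hK k hk).1
    have h2 : (fun j => u (j + k)) = fun j => ItinEntry.int (u' (j + k)) :=
      funext fun j => hu' (j + k)
    rw [h2, h]
  have hKm : ∀ k, 1 ≤ k → (fun j => ItinEntry.int (u' (j + k))) ≠ itinMinus s s := by
    intro k hk h
    apply (hK k hk).2
    have h2 : (fun j => u (j + k)) = fun j => ItinEntry.int (u' (j + k)) :=
      funext fun j => hu' (j + k)
    rw [h2, h]
  obtain ⟨N, hN⟩ := exists_N (s := s) hp hu'per hKp hKm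
  have part2sol : ∀ rz : ℕ → ℤ, Sol s u' 0 rz → ∃ n, PeriodicAddr (toAddr rz) n := by
    intro rz hsol
    obtain ⟨d, hd, hperiod⟩ := sol_periodic hp hu'per hN hsol
    exact exists_exact_period _ hd hperiod
  constructor
  · obtain ⟨rz, hsol⟩ := exists_sol hp hu'per hKp hKm
    refine ⟨toAddr rz, toAddr_ext rz, part2sol rz hsol, ?_⟩
    funext k
    rw [itin_of_sol hsol k, hu' k]
  · intro r hbar hit
    have hstar : ∀ k, itin s r k = ItinEntry.int (u' k) :=
      fun k => (congrFun hit k).trans (hu' k)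
    have hext : IsExtAddr r := by
      rcases hbar with hdot | htop
      · rcases hdot with hext | ⟨n, hn2, hintm⟩
        · exact hext
        · exfalso
          have htopn : shiftIter r (n - 1) = topAddr := by
            funext j
            exact hintm.2.2.2 (j + (n - 1)) (by omega)
          have h1 := hstar (n - 1)
          unfold itin at h1
          rw [if_pos htopn] at h1
          exact ItinEntry.noConfusion h1
      · exfalso
        have h1 := hstar 0
        have htop0 : shiftIter r 0 = topAddr := by rw [shiftIter_zero, htop]
        unfold itin at h1
        rw [if_pos htop0] at h1
        exact ItinEntry.noConfusion h1
    have hext2 := hext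
    choose rz hrz using hext2
    have hr : r = toAddr rz := funext hrz
    refine ⟨hext, ?_⟩
    rw [hr]
    apply part2sol
    apply sol_of_itin
    intro k
    rw [← hr]
    exact hstar k

end
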